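/- Let (H_k, k) and (H_ℓ, ℓ) be RKHSs on a set X such that the pair (k, ℓ) has the Pick property. Let F ⊆ X, let α : F → ℂ, and suppose there is a bounded operator T from the closed linear span of {ℓ_λ : λ ∈ F} into H_k such that T(ℓ_λ/‖ℓ_λ‖) = conj(α(λ)) · k_λ/‖k_λ‖ for every λ ∈ F. Then there exists φ ∈ Mult(H_k, H_ℓ) with ‖M_φ‖ ≤ ‖T‖ such that φ(λ) = α(λ)·‖ℓ_λ‖/‖k_λ‖ for all λ ∈ F (i.e., the Pick property for finite sets implies solvability of Pick problems with infinitely many nodes, with no increase in norm). -/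

import Mathlib

noncomputable section

open scoped InnerProductSpace ComplexOrder
open Filter Topology

/-- `φ : X → ℂ` is a multiplier from the RKHS on `X` with kernel map `k` to the RKHS with
kernel map `l`, implemented by the bounded operator `T`, i.e. `T* l_x = conj (φ x) • k_x`. -/
def IsMultiplier {X Hk Hl : Type*}
    [NormedAddCommGroup Hk] [InnerProductSpace ℂ Hk] [CompleteSpace Hk]
    [NormedAddCommGroup Hl] [InnerProductSpace ℂ Hl] [CompleteSpace Hl]
    (k : X → Hk) (l : X → Hl) (φ : X → ℂ) (T : Hk →L[ℂ] Hl) : Prop :=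
  ∀ x, ContinuousLinearMap.adjoint T (l x) = (starRingEnd ℂ) (φ x) • k x

/-- The pair of kernels `(k, l)` has the Pick property: every finite positivity condition
guarantees a norm-one multiplier solving the corresponding interpolation problem. -/
def PickPair {X Hk Hl : Type*}
    [NormedAddCommGroup Hk] [InnerProductSpace ℂ Hk] [CompleteSpace Hk]
    [NormedAddCommGroup Hl] [InnerProductSpace ℂ Hl] [CompleteSpace Hl]
    (k : X → Hk) (l : X → Hl) : Prop :=
  ∀ (n : ℕ) (p : Fin n → X), Function.Injective p → ∀ w : Fin n → ℂ,
    (∀ a : Fin n → ℂ,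
      0 ≤ ∑ i, ∑ j, a i * (starRingEnd ℂ) (a j) *
        (⟪l (p j), l (p i)⟫_ℂ - w i * (starRingEnd ℂ) (w j) * ⟪k (p j), k (p i)⟫_ℂ)) →
    ∃ (φ : X → ℂ) (T : Hk →L[ℂ] Hl), IsMultiplier k l φ T ∧ ‖T‖ ≤ 1 ∧ ∀ i, φ (p i) = w i

lemma limit_op {ι : Type*} {Hk Hl : Type*}
    [NormedAddCommGroup Hk] [InnerProductSpace ℂ Hk] [CompleteSpace Hk]
    [NormedAddCommGroup Hl] [InnerProductSpace ℂ Hl] [CompleteSpace Hl]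
    (U : Ultrafilter ι) (S : ι → (Hk →L[ℂ] Hl)) (hS : ∀ i, ‖S i‖ ≤ 1) :
    ∃ Sf : Hk →L[ℂ] Hl, ‖Sf‖ ≤ 1 ∧
      ∀ x y, Tendsto (fun i => ⟪S i x, y⟫_ℂ) (U : Filter ι) (𝓝 ⟪Sf x, y⟫_ℂ) := by
  have hbd : ∀ (x : Hk) (y : Hl) i, ‖⟪S i x, y⟫_ℂ‖ ≤ ‖x‖ * ‖y‖ := by
    intro x y i
    calc ‖⟪S i x, y⟫_ℂ‖ ≤ ‖S i x‖ * ‖y‖ := norm_inner_le_norm _ _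
    _ ≤ (‖S i‖ * ‖x‖) * ‖y‖ := by
        gcongr; exact (S i).le_opNorm x
    _ ≤ (1 * ‖x‖) * ‖y‖ := by
        have := hS i; gcongr
    _ = ‖x‖ * ‖y‖ := by ring
  have hex : ∀ (x : Hk) (y : Hl), ∃ z : ℂ, ‖z‖ ≤ ‖x‖ * ‖y‖ ∧
      Tendsto (fun i => ⟪S i x, y⟫_ℂ) (U : Filter ι) (𝓝 z) := by
    intro x y
    obtain ⟨z, hmem, hz⟩ := (isCompact_closedBall (0 : ℂ) (‖x‖ * ‖y‖)).ultrafilter_le_nhds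
      (U.map fun i => ⟪S i x, y⟫_ℂ)
      (by
        rw [Ultrafilter.coe_map, Filter.le_principal_iff, Filter.mem_map]
        refine Filter.univ_mem' fun i => ?_
        simpa [Metric.mem_closedBall, dist_eq_norm] using hbd x y i)
    refine ⟨z, by simpa [Metric.mem_closedBall, dist_eq_norm] using hmem, hz⟩
  choose z hzbd hz using hex
  -- functional in y for fixed x
  have hadd : ∀ (x : Hk) (y y' : Hl), z x (y + y') = z x y + z x y' := by
    intro x y y'
    refine tendsto_nhds_unique (f := fun i => ⟪S i x, y + y'⟫_ℂ) (hz x (y + y')) ?_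
    have : (fun i => ⟪S i x, y + y'⟫_ℂ) = fun i => ⟪S i x, y⟫_ℂ + ⟪S i x, y'⟫_ℂ := by
      funext i; rw [inner_add_right]
    rw [this]
    exact (hz x y).add (hz x y')
  have hsmul : ∀ (x : Hk) (c : ℂ) (y : Hl), z x (c • y) = c * z x y := by
    intro x c y
    refine tendsto_nhds_unique (f := fun i => ⟪S i x, c • y⟫_ℂ) (hz x (c • y)) ?_
    have : (fun i => ⟪S i x, c • y⟫_ℂ) = fun i => c * ⟪S i x, y⟫_ℂ := by
      funext i; rw [inner_smul_right]
    rw [this]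
    exact (hz x y).const_mul c
  let g : Hk → (Hl →L[ℂ] ℂ) := fun x =>
    LinearMap.mkContinuous
      { toFun := z x, map_add' := hadd x, map_smul' := hsmul x } ‖x‖
      (fun y => hzbd x y)
  have hg : ∀ x y, g x y = z x y := fun x y => rfl
  let Sf0 : Hk → Hl := fun x => (InnerProductSpace.toDual ℂ Hl).symm (g x)
  have hSf0 : ∀ x y, ⟪Sf0 x, y⟫_ℂ = z x y := by
    intro x y
    rw [show (⟪Sf0 x, y⟫_ℂ) = (InnerProductSpace.toDual ℂ Hl) (Sf0 x) y from rfl]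
    simp [Sf0, hg]
  have hSadd : ∀ x x', Sf0 (x + x') = Sf0 x + Sf0 x' := by
    intro x x'
    refine ext_inner_right ℂ fun y => ?_
    rw [inner_add_left, hSf0, hSf0, hSf0]
    refine tendsto_nhds_unique (f := fun i => ⟪S i (x + x'), y⟫_ℂ) (hz _ y) ?_
    have : (fun i => ⟪S i (x + x'), y⟫_ℂ) = fun i => ⟪S i x, y⟫_ℂ + ⟪S i x', y⟫_ℂ := by
      funext i; rw [map_add, inner_add_left]
    rw [this]
    exact (hz x y).add (hz x' y)
  have hSsmul : ∀ (c : ℂ) x, Sf0 (c • x) = c • Sf0 x := by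
    intro c x
    refine ext_inner_right ℂ fun y => ?_
    rw [inner_smul_left, hSf0, hSf0]
    refine tendsto_nhds_unique (f := fun i => ⟪S i (c • x), y⟫_ℂ) (hz _ y) ?_
    have : (fun i => ⟪S i (c • x), y⟫_ℂ) = fun i => (starRingEnd ℂ) c * ⟪S i x, y⟫_ℂ := by
      funext i; rw [map_smul, inner_smul_left]
    rw [this]
    exact (hz x y).const_mul _
  have hSbd : ∀ x, ‖Sf0 x‖ ≤ 1 * ‖x‖ := by
    intro x
    rw [one_mul]
    have h1 : (⟪Sf0 x, Sf0 x⟫_ℂ) = z x (Sf0 x) := hSf0 x (Sf0 x)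
    have h2 : ‖(⟪Sf0 x, Sf0 x⟫_ℂ)‖ = ‖Sf0 x‖ ^ 2 := by
      rw [inner_self_eq_norm_sq_to_K]
      simp [norm_pow]
    have h3 : ‖Sf0 x‖ ^ 2 ≤ ‖x‖ * ‖Sf0 x‖ := by
      rw [← h2, h1]; exact hzbd x (Sf0 x)
    rcases eq_or_lt_of_le (norm_nonneg (Sf0 x)) with h | h
    · rw [← h]; exact norm_nonneg x
    · nlinarith
  refine ⟨LinearMap.mkContinuous
    { toFun := Sf0, map_add' := hSadd, map_smul' := hSsmul } 1 hSbd, ?_, ?_⟩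
  · exact LinearMap.mkContinuous_norm_le _ zero_le_one _
  · intro x y
    exact (hSf0 x y) ▸ hz x y

lemma aux_sum {E F : Type*} [NormedAddCommGroup E] [InnerProductSpace ℂ E]
    [NormedAddCommGroup F] [InnerProductSpace ℂ F]
    (n : ℕ) (u : Fin n → E) (v : Fin n → F) (a w : Fin n → ℂ) :
    ∑ i, ∑ j, a i * (starRingEnd ℂ) (a j) *
        (⟪u j, u i⟫_ℂ - w i * (starRingEnd ℂ) (w j) * ⟪v j, v i⟫_ℂ)
      = ((‖∑ i, a i • u i‖ : ℂ)^2 - (‖∑ i, (a i * w i) • v i‖ : ℂ)^2) := by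
  have key : ∑ i, ∑ j, a i * (starRingEnd ℂ) (a j) *
        (⟪u j, u i⟫_ℂ - w i * (starRingEnd ℂ) (w j) * ⟪v j, v i⟫_ℂ)
      = ⟪∑ i, a i • u i, ∑ i, a i • u i⟫_ℂ
        - ⟪∑ i, (a i * w i) • v i, ∑ i, (a i * w i) • v i⟫_ℂ := by
    rw [sum_inner, sum_inner]
    simp only [inner_sum, inner_smul_left, inner_smul_right]
    rw [← Finset.sum_sub_distrib, Finset.sum_comm]
    refine Finset.sum_congr rfl fun j _ => ?_
    rw [← Finset.sum_sub_distrib]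
    refine Finset.sum_congr rfl fun i _ => ?_
    simp only [map_mul]
    ring
  rw [key, inner_self_eq_norm_sq_to_K, inner_self_eq_norm_sq_to_K]
  norm_cast

lemma pos_of_norm {X Hk Hl : Type*}
    [NormedAddCommGroup Hk] [InnerProductSpace ℂ Hk]
    [NormedAddCommGroup Hl] [InnerProductSpace ℂ Hl]
    (k : X → Hk) (l : X → Hl) (n : ℕ) (p : Fin n → X) (v a : Fin n → ℂ)
    (h : ‖∑ i, (a i * v i) • k (p i)‖ ≤ ‖∑ i, a i • l (p i)‖) :
    0 ≤ ∑ i, ∑ j, a i * (starRingEnd ℂ) (a j) *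
        (⟪l (p j), l (p i)⟫_ℂ - v i * (starRingEnd ℂ) (v j) * ⟪k (p j), k (p i)⟫_ℂ) := by
  rw [aux_sum n (fun i => l (p i)) (fun i => k (p i)) a v]
  rw [← Complex.ofReal_pow, ← Complex.ofReal_pow, ← Complex.ofReal_sub,
    Complex.zero_le_real, sub_nonneg]
  exact pow_le_pow_left₀ (norm_nonneg _) h 2

lemma necessity {X Hk Hl : Type*}
    [NormedAddCommGroup Hk] [InnerProductSpace ℂ Hk] [CompleteSpace Hk]
    [NormedAddCommGroup Hl] [InnerProductSpace ℂ Hl] [CompleteSpace Hl]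
    (k : X → Hk) (l : X → Hl) {ψ : X → ℂ} {S : Hk →L[ℂ] Hl}
    (hm : IsMultiplier k l ψ S) (hb : ‖S‖ ≤ 1)
    (n : ℕ) (p : Fin n → X) (a : Fin n → ℂ) :
    ‖∑ i, (a i * (starRingEnd ℂ) (ψ (p i))) • k (p i)‖ ≤ ‖∑ i, a i • l (p i)‖ := by
  have h1 : ContinuousLinearMap.adjoint S (∑ i, a i • l (p i))
      = ∑ i, (a i * (starRingEnd ℂ) (ψ (p i))) • k (p i) := by
    rw [map_sum]
    refine Finset.sum_congr rfl fun i _ => ?_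
    rw [map_smul, hm (p i), smul_smul]
  calc ‖∑ i, (a i * (starRingEnd ℂ) (ψ (p i))) • k (p i)‖
      = ‖ContinuousLinearMap.adjoint S (∑ i, a i • l (p i))‖ := by rw [h1]
    _ ≤ ‖ContinuousLinearMap.adjoint S‖ * ‖∑ i, a i • l (p i)‖ :=
        ContinuousLinearMap.le_opNorm _ _
    _ ≤ 1 * ‖∑ i, a i • l (p i)‖ := by
        have : ‖ContinuousLinearMap.adjoint S‖ = ‖S‖ :=
          ContinuousLinearMap.adjoint.norm_map S
        rw [this]; gcongr
    _ = _ := one_mul _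

lemma finite_stage {X Hk Hl : Type*}
    [NormedAddCommGroup Hk] [InnerProductSpace ℂ Hk] [CompleteSpace Hk]
    [NormedAddCommGroup Hl] [InnerProductSpace ℂ Hl] [CompleteSpace Hl]
    (k : X → Hk) (l : X → Hl) (hpick : PickPair k l) (G : Set X) (w : X → ℂ)
    (hn : ∀ (n : ℕ) (p : Fin n → X), (∀ i, p i ∈ G) → ∀ a : Fin n → ℂ,
      ‖∑ i, (a i * (starRingEnd ℂ) (w (p i))) • k (p i)‖ ≤ ‖∑ i, a i • l (p i)‖)
    (E : Finset X) (hE : ↑E ⊆ G) :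
    ∃ (φ : X → ℂ) (S : Hk →L[ℂ] Hl), IsMultiplier k l φ S ∧ ‖S‖ ≤ 1 ∧
      ∀ lam ∈ E, φ lam = w lam := by
  classical
  set n := E.card with hn'
  set p : Fin n → X := fun i => ((E.equivFin.symm i : E) : X) with hp
  have hpG : ∀ i, p i ∈ G := fun i => hE (E.equivFin.symm i).2
  have hpinj : Function.Injective p :=
    Subtype.val_injective.comp E.equivFin.symm.injective
  -- first application: with conjugated values
  obtain ⟨ψ, S1, hm1, hb1, hv1⟩ := hpick n p hpinj (fun i => (starRingEnd ℂ) (w (p i)))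
    (fun a => pos_of_norm k l n p _ a (by
      simpa using hn n p hpG a))
  -- second application: with true values
  obtain ⟨φ, S2, hm2, hb2, hv2⟩ := hpick n p hpinj (fun i => w (p i))
    (fun a => pos_of_norm k l n p _ a (by
      have := necessity k l hm1 hb1 n p a
      simpa [hv1] using this))
  refine ⟨φ, S2, hm2, hb2, fun lam hlam => ?_⟩
  have : lam = p (E.equivFin ⟨lam, hlam⟩) := by simp [hp]
  rw [this, hv2]

set_option maxHeartbeats 1000000 in
/-- The Pick property for finite sets of nodes implies solvability of Pick problems with
infinitely many nodes, with no increase in norm: any bounded operator on the closed span of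
the kernel functions over `F ⊆ X` acting by `ℓ_λ/‖ℓ_λ‖ ↦ conj (α λ) • k_λ/‖k_λ‖` extends to
the adjoint of a multiplier of norm at most `‖T‖` interpolating the prescribed values. -/
theorem statement7 {X Hk Hl : Type*}
    [NormedAddCommGroup Hk] [InnerProductSpace ℂ Hk] [CompleteSpace Hk]
    [NormedAddCommGroup Hl] [InnerProductSpace ℂ Hl] [CompleteSpace Hl]
    (k : X → Hk) (hk : ∀ x, k x ≠ 0)
    (hdense_k : Dense ((Submodule.span ℂ (Set.range k) : Submodule ℂ Hk) : Set Hk))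
    (l : X → Hl) (hl : ∀ x, l x ≠ 0)
    (hdense_l : Dense ((Submodule.span ℂ (Set.range l) : Submodule ℂ Hl) : Set Hl))
    (hpick : PickPair k l)
    (F : Set X) (α : X → ℂ)
    (T : (Submodule.span ℂ (l '' F)).topologicalClosure →L[ℂ] Hk)
    (hT : ∀ (lam : X) (hlam : lam ∈ F),
      T ⟨(‖l lam‖ : ℂ)⁻¹ • l lam,
          Submodule.le_topologicalClosure _
            (Submodule.smul_mem _ _ (Submodule.subset_span ⟨lam, hlam, rfl⟩))⟩
        = (starRingEnd ℂ) (α lam) • ((‖k lam‖ : ℂ)⁻¹ • k lam)) :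
    ∃ (φ : X → ℂ) (S : Hk →L[ℂ] Hl), IsMultiplier k l φ S ∧ ‖S‖ ≤ ‖T‖ ∧
      ∀ lam ∈ F, φ lam = α lam * (‖l lam‖ : ℂ) / (‖k lam‖ : ℂ) := by
  classical
  set φ0 : X → ℂ := fun x => α x * (‖l x‖ : ℂ) / (‖k x‖ : ℂ) with hφ0
  -- degenerate case
  rcases eq_or_lt_of_le (norm_nonneg T) with hc | hc
  · have hT0 : T = 0 := by
      rw [← ContinuousLinearMap.opNorm_zero_iff]; exact hc.symm
    have hα : ∀ lam ∈ F, α lam = 0 := by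
      intro lam hlam
      have h1 := hT lam hlam
      rw [hT0] at h1
      simp only [ContinuousLinearMap.zero_apply] at h1
      have hk0 : (‖k lam‖ : ℂ)⁻¹ • k lam ≠ 0 := by
        simp [smul_eq_zero, hk lam, norm_eq_zero, hk lam]
      rcases smul_eq_zero.mp h1.symm with h | h
      · simpa using h
      · exact absurd h hk0
    refine ⟨0, 0, ?_, ?_, ?_⟩
    · intro x; simp
    · simp [← hc]
    · intro lam hlam; simp [hα lam hlam]
  -- main case
  have hTne : (‖T‖ : ℂ) ≠ 0 := by
    simpa using hc.ne'
  -- action of T on the kernel vectors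
  have hTl : ∀ (lam : X) (hlam : lam ∈ F),
      T ⟨l lam, Submodule.le_topologicalClosure _
          (Submodule.subset_span ⟨lam, hlam, rfl⟩)⟩
        = (starRingEnd ℂ) (φ0 lam) • k lam := by
    intro lam hlam
    have hl0 : (‖l lam‖ : ℂ) ≠ 0 := by
      simpa using (norm_ne_zero_iff.mpr (hl lam))
    set m : (Submodule.span ℂ (l '' F)).topologicalClosure := ⟨l lam, Submodule.le_topologicalClosure _
          (Submodule.subset_span ⟨lam, hlam, rfl⟩)⟩ with hm'
    have harg : (⟨(‖l lam‖ : ℂ)⁻¹ • l lam,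
        Submodule.le_topologicalClosure _
            (Submodule.smul_mem _ _ (Submodule.subset_span ⟨lam, hlam, rfl⟩))⟩ :
          (Submodule.span ℂ (l '' F)).topologicalClosure)
        = (‖l lam‖ : ℂ)⁻¹ • m := by
      apply Subtype.ext; simp [hm']
    have h1 := hT lam hlam
    rw [harg, map_smul] at h1
    have h2 := congrArg (fun z => (‖l lam‖ : ℂ) • z) h1
    simp only [smul_smul, mul_inv_cancel₀ hl0, one_smul] at h2
    rw [h2]
    congr 1
    rw [hφ0]
    simp only [map_mul, map_div₀, Complex.conj_ofReal]
    field_simp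
  -- normalized target values
  set w : X → ℂ := fun x => φ0 x / (‖T‖ : ℂ) with hw
  -- the norm inequality delivered by T, for finite tuples from F
  have hn : ∀ (n : ℕ) (p : Fin n → X), (∀ i, p i ∈ F) → ∀ a : Fin n → ℂ,
      ‖∑ i, (a i * (starRingEnd ℂ) (w (p i))) • k (p i)‖ ≤ ‖∑ i, a i • l (p i)‖ := by
    intro n p hpF a
    set m : Fin n → (Submodule.span ℂ (l '' F)).topologicalClosure :=
      fun i => ⟨l (p i), Submodule.le_topologicalClosure _
        (Submodule.subset_span ⟨p i, hpF i, rfl⟩)⟩ with hm'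
    have hcoe : ((∑ i, a i • m i : (Submodule.span ℂ (l '' F)).topologicalClosure) : Hl) = ∑ i, a i • l (p i) := by
      simp [hm']
    have hTu : T (∑ i, a i • m i)
        = ∑ i, (a i * (starRingEnd ℂ) (φ0 (p i))) • k (p i) := by
      rw [map_sum]
      refine Finset.sum_congr rfl fun i _ => ?_
      rw [map_smul, hTl (p i) (hpF i), smul_smul]
    have hbd : ‖T (∑ i, a i • m i)‖ ≤ ‖T‖ * ‖∑ i, a i • l (p i)‖ := by
      calc ‖T (∑ i, a i • m i)‖ ≤ ‖T‖ * ‖∑ i, a i • m i‖ := T.le_opNorm _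
        _ = ‖T‖ * ‖∑ i, a i • l (p i)‖ := by
            rw [show ‖∑ i, a i • m i‖ = ‖((∑ i, a i • m i : (Submodule.span ℂ (l '' F)).topologicalClosure) : Hl)‖ from rfl, hcoe]
    have hrw : ∑ i, (a i * (starRingEnd ℂ) (w (p i))) • k (p i)
        = ((‖T‖ : ℂ))⁻¹ • ∑ i, (a i * (starRingEnd ℂ) (φ0 (p i))) • k (p i) := by
      rw [Finset.smul_sum]
      refine Finset.sum_congr rfl fun i _ => ?_
      rw [smul_smul]
      congr 1
      rw [hw]
      simp only [map_div₀, Complex.conj_ofReal]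
      field_simp
    rw [hrw, norm_smul, ← hTu]
    have hTc : ‖((‖T‖ : ℂ))⁻¹‖ = ‖T‖⁻¹ := by
      rw [norm_inv, Complex.norm_real, Real.norm_eq_abs, abs_of_pos hc]
    rw [hTc]
    calc ‖T‖⁻¹ * ‖T (∑ i, a i • m i)‖ ≤ ‖T‖⁻¹ * (‖T‖ * ‖∑ i, a i • l (p i)‖) := by
          gcongr
      _ = ‖∑ i, a i • l (p i)‖ := by
          field_simp
  -- finite stages
  have hstage : ∀ E : Finset X, ∃ (φE : X → ℂ) (SE : Hk →L[ℂ] Hl),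
      IsMultiplier k l φE SE ∧ ‖SE‖ ≤ 1 ∧
        ∀ lam ∈ E.filter (· ∈ F), φE lam = w lam := by
    intro E
    refine finite_stage k l hpick F w hn (E.filter (· ∈ F)) ?_
    intro x hx
    simp only [Finset.coe_filter, Set.mem_setOf_eq] at hx
    exact hx.2
  choose Φ S hm hb hv using hstage
  have : (atTop : Filter (Finset X)).NeBot := atTop_neBot
  set U : Ultrafilter (Finset X) := Ultrafilter.of atTop with hU
  obtain ⟨Sf, hSfnorm, hSftend⟩ := limit_op U S hb
  have key : ∀ (E : Finset X) (x : X) (u : Hk),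
      ⟪l x, S E u⟫_ℂ = Φ E x * ⟪k x, u⟫_ℂ := by
    intro E x u
    rw [← ContinuousLinearMap.adjoint_inner_left, hm E x, inner_smul_left,
      starRingEnd_self_apply]
  have tendconj : ∀ (x : X) (u : Hk),
      Tendsto (fun E => ⟪l x, S E u⟫_ℂ) (U : Filter (Finset X)) (𝓝 ⟪l x, Sf u⟫_ℂ) := by
    intro x u
    have h1 := (hSftend u (l x)).star
    have h2 : (fun E => star ⟪S E u, l x⟫_ℂ) = fun E => ⟪l x, S E u⟫_ℂ := by
      funext E; exact inner_conj_symm _ _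
    rw [h2, show star ⟪Sf u, l x⟫_ℂ = ⟪l x, Sf u⟫_ℂ from inner_conj_symm _ _] at h1
    exact h1
  have hkk : ∀ x : X, ⟪k x, k x⟫_ℂ ≠ 0 := fun x => by
    simpa [inner_self_eq_zero] using hk x
  set φf : X → ℂ := fun x => ⟪l x, Sf (k x)⟫_ℂ / ⟪k x, k x⟫_ℂ with hφf
  have tendφ : ∀ x : X, Tendsto (fun E => Φ E x) (U : Filter (Finset X)) (𝓝 (φf x)) := by
    intro x
    have h1 := (tendconj x (k x)).div_const ⟪k x, k x⟫_ℂ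
    refine h1.congr fun E => ?_
    rw [key E x (k x), mul_div_cancel_right₀ _ (hkk x)]
  have hmf : IsMultiplier k l φf Sf := by
    intro x
    refine ext_inner_right ℂ fun u => ?_
    rw [ContinuousLinearMap.adjoint_inner_left, inner_smul_left, starRingEnd_self_apply]
    refine tendsto_nhds_unique (tendconj x u) ?_
    have h2 : (fun E => ⟪l x, S E u⟫_ℂ) = fun E => Φ E x * ⟪k x, u⟫_ℂ :=
      funext fun E => key E x u
    rw [h2]
    exact (tendφ x).mul_const _
  have hval : ∀ lam ∈ F, φf lam = w lam := by
    intro lam hlam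
    have hev : ∀ᶠ E in (atTop : Filter (Finset X)), Φ E lam = w lam := by
      filter_upwards [eventually_ge_atTop ({lam} : Finset X)] with E hE
      refine hv E lam ?_
      simp only [Finset.mem_filter]
      exact ⟨Finset.singleton_subset_iff.mp hE, hlam⟩
    have hev' : ∀ᶠ E in (U : Filter (Finset X)), Φ E lam = w lam :=
      (Ultrafilter.of_le atTop) hev
    have htc : Tendsto (fun E => Φ E lam) (U : Filter (Finset X)) (𝓝 (w lam)) := by
      exact Tendsto.congr' (hev'.mono fun E h => h.symm) tendsto_const_nhds
    exact tendsto_nhds_unique (tendφ lam) htc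
  refine ⟨fun x => (‖T‖ : ℂ) * φf x, (‖T‖ : ℂ) • Sf, ?_, ?_, ?_⟩
  · intro x
    rw [map_smulₛₗ]
    simp only [ContinuousLinearMap.coe_smul', Pi.smul_apply, hmf x, smul_smul,
      Complex.conj_ofReal, map_mul]
  · calc ‖(‖T‖ : ℂ) • Sf‖ ≤ ‖((‖T‖ : ℂ))‖ * ‖Sf‖ := ContinuousLinearMap.opNorm_smul_le _ _
      _ = ‖T‖ * ‖Sf‖ := by rw [Complex.norm_real, Real.norm_eq_abs, abs_of_pos hc]
      _ ≤ ‖T‖ * 1 := by gcongr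
      _ = ‖T‖ := mul_one _
  · intro lam hlam
    show (‖T‖ : ℂ) * φf lam = φ0 lam
    rw [hval lam hlam, show w lam = φ0 lam / (‖T‖ : ℂ) from rfl, mul_comm,
      div_mul_cancel₀ _ hTne]
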